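/- arXiv:2311.17426 — 2 statements merged into one kernel-verified Lean document; each statement's English description precedes it below -/
import Mathlib

section
/- There exist a set Γ and a group G of permutations of Γ such that |G|_∞ > |F_{G,Γ}^N| for every N ∈ ℕ. In fact, one may take Γ = ω_ω (the ω-th infinite initial ordinal) and construct G so that |F_{G,Γ}^N| = ℵ_{N−1} for every N ∈ ℕ, while |G|_∞ = ℵ_ω. -/
open scoped Cardinal

noncomputable section

/-- The orbit of `γ` under a group `G` of permutations of `Γ`. -/
def orbitOf {Γ : Type*} (G : Subgroup (Equiv.Perm Γ)) (γ : Γ) : Set Γ :=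
  {δ : Γ | ∃ g ∈ G, g γ = δ}

/-- The set of orbits of the action of `G` on `Γ`. -/
def orbitsOf {Γ : Type*} (G : Subgroup (Equiv.Perm Γ)) : Set (Set Γ) :=
  Set.range (orbitOf G)

/-- `F_{G,Γ}^N` : the set of orbits of the action of `G` on `Γ` of cardinality at most `N`. -/
def FGN {Γ : Type*} (G : Subgroup (Equiv.Perm Γ)) (N : ℕ) : Set (Set Γ) :=
  {S ∈ orbitsOf G | Cardinal.mk S ≤ (N : Cardinal)}

/-- `|G|_∞` : the supremum of the (infinite) cardinalities of the families `F_{G,Γ}^N`,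
`N ∈ ℕ`, whenever one of them is infinite, and `0` otherwise. -/
def GInftyCard {Γ : Type*} (G : Subgroup (Equiv.Perm Γ)) : Cardinal :=
  sSup {c : Cardinal | ∃ N : ℕ, c = Cardinal.mk (FGN G N) ∧ Cardinal.aleph0 ≤ c}

/-- Auxiliary: a set of cardinality `ℵ_k`. -/
private def AA (k : ℕ) : Type := ((Cardinal.aleph k).ord).ToType

private lemma mk_AA (k : ℕ) : Cardinal.mk (AA k) = Cardinal.aleph k :=
  Cardinal.mk_ord_toType _

private lemma aleph_omega_eq :
    Cardinal.aleph (Ordinal.omega0 : Ordinal.{0}) = ⨆ n : ℕ, Cardinal.aleph (n : Ordinal.{0}) := by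
  apply le_antisymm
  · rw [Cardinal.aleph_limit Ordinal.isSuccLimit_omega0]
    apply ciSup_le'
    intro a
    obtain ⟨n, hn⟩ := Ordinal.lt_omega0.mp a.2
    calc Cardinal.aleph a ≤ Cardinal.aleph n := Cardinal.aleph_le_aleph.2 (le_of_eq hn)
    _ ≤ _ := le_ciSup (f := fun n : ℕ => Cardinal.aleph n) (Cardinal.bddAbove_range _) n
  · exact ciSup_le' fun n => Cardinal.aleph_le_aleph.2 (Ordinal.nat_lt_omega0 n).le

/-- Our Γ. -/
private def Gam : Type := Σ k : ℕ, AA k × Fin (k + 1)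

/-- Projection forgetting the `Fin` component. -/
private def bp (x : Gam) : Σ k : ℕ, AA k := ⟨x.1, x.2.1⟩

/-- The group of permutations preserving `bp`. -/
private def Grp0 : Subgroup (Equiv.Perm Gam) where
  carrier := {g | ∀ x, bp (g x) = bp x}
  one_mem' := fun _ => rfl
  mul_mem' := fun {g h} hg hh x => by
    have : (g * h) x = g (h x) := rfl
    rw [this, hg (h x), hh x]
  inv_mem' := fun {g} hg x => by
    have := (hg (g⁻¹ x)).symm
    rwa [show g (g⁻¹ x) = x from g.apply_symm_apply x] at this

/-- Fiber of the projection. -/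
private def fib (b : Σ k : ℕ, AA k) : Set Gam := {y | bp y = b}

private lemma orbit_eq_fib (x : Gam) : orbitOf Grp0 x = fib (bp x) := by
  classical
  ext y
  constructor
  · rintro ⟨g, hg, rfl⟩
    exact hg x
  · intro (hy : bp y = bp x)
    refine ⟨Equiv.swap x y, fun z => ?_, Equiv.swap_apply_left x y⟩
    rcases eq_or_ne z x with rfl | hzx
    · rw [Equiv.swap_apply_left, hy]
    rcases eq_or_ne z y with rfl | hzy
    · rw [Equiv.swap_apply_right, hy]
    · rw [Equiv.swap_apply_of_ne_of_ne hzx hzy]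

private lemma bp_surj : Function.Surjective bp :=
  fun b => ⟨⟨b.1, b.2, 0⟩, rfl⟩

private lemma orbitsOf_eq : orbitsOf Grp0 = Set.range fib := by
  apply subset_antisymm
  · rintro _ ⟨x, rfl⟩; exact ⟨bp x, (orbit_eq_fib x).symm⟩
  · rintro _ ⟨b, rfl⟩
    obtain ⟨x, rfl⟩ := bp_surj b
    exact ⟨x, orbit_eq_fib x⟩

private def fibEquiv (b : Σ k : ℕ, AA k) : fib b ≃ Fin (b.1 + 1) where
  toFun y := (show y.1.1 = b.1 from congrArg Sigma.fst y.2) ▸ y.1.2.2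
  invFun i := ⟨⟨b.1, b.2, i⟩, rfl⟩
  left_inv := by
    rintro ⟨⟨k, a, i⟩, hy⟩
    have hy' : (⟨k, a⟩ : Σ k : ℕ, AA k) = b := hy
    subst hy'
    rfl
  right_inv i := rfl

private lemma mk_fib (b : Σ k : ℕ, AA k) : Cardinal.mk (fib b) = (b.1 + 1 : ℕ) := by
  rw [Cardinal.mk_congr (fibEquiv b), Cardinal.mk_fin]

private lemma fib_inj : Function.Injective fib := by
  intro b b' h
  have : (⟨b.1, b.2, 0⟩ : Gam) ∈ fib b := rfl
  rw [h] at this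
  exact this

private lemma FGN_eq (N : ℕ) : FGN Grp0 N = fib '' {b | b.1 + 1 ≤ N} := by
  ext S
  constructor
  · rintro ⟨hS, hcard⟩
    rw [orbitsOf_eq] at hS
    obtain ⟨b, rfl⟩ := hS
    rw [mk_fib] at hcard
    exact ⟨b, Nat.cast_le.mp hcard, rfl⟩
  · rintro ⟨b, hb, rfl⟩
    refine ⟨orbitsOf_eq ▸ ⟨b, rfl⟩, ?_⟩
    rw [mk_fib]
    exact Nat.cast_le.mpr hb

private def baseEquiv (M : ℕ) : {b : Σ k : ℕ, AA k | b.1 + 1 ≤ M + 1} ≃ Σ k : Fin (M + 1), AA k where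
  toFun x := ⟨⟨x.1.1, Nat.lt_succ_of_le (Nat.succ_le_succ_iff.mp x.2)⟩, x.1.2⟩
  invFun y := ⟨⟨y.1.1, y.2⟩, Nat.succ_le_succ (Nat.lt_succ_iff.mp y.1.2)⟩
  left_inv x := rfl
  right_inv y := rfl

private lemma mk_FGN (M : ℕ) :
    Cardinal.mk (FGN Grp0 (M + 1)) = Cardinal.aleph (M : Ordinal.{0}) := by
  rw [FGN_eq, Cardinal.mk_image_eq fib_inj]
  apply le_antisymm
  · rw [Cardinal.mk_congr (baseEquiv M), Cardinal.mk_sigma]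
    calc (Cardinal.sum fun k : Fin (M + 1) => Cardinal.mk (AA k))
        ≤ Cardinal.sum fun _ : Fin (M + 1) => Cardinal.aleph M := by
          refine Cardinal.sum_le_sum _ _ fun k => ?_
          rw [mk_AA]
          exact Cardinal.aleph_le_aleph.2 (by exact_mod_cast Nat.lt_succ_iff.mp k.2)
      _ = (Cardinal.mk (Fin (M + 1))) * Cardinal.aleph M := Cardinal.sum_const' _ _
      _ ≤ Cardinal.aleph M * Cardinal.aleph M := by
          refine mul_le_mul_left ?_ _
          rw [Cardinal.mk_fin]
          exact le_trans (Cardinal.nat_lt_aleph0 _).le (Cardinal.aleph0_le_aleph _)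
      _ = Cardinal.aleph M := Cardinal.mul_eq_self (Cardinal.aleph0_le_aleph _)
  · rw [← mk_AA M]
    exact Cardinal.mk_le_of_injective (f := fun a : AA M =>
      (⟨⟨M, a⟩, show M + 1 ≤ M + 1 from le_refl _⟩ : {b : Σ k : ℕ, AA k | b.1 + 1 ≤ M + 1}))
      (fun a a' h => by simpa using h)

private lemma FGN_zero : Cardinal.mk (FGN Grp0 0) = 0 := by
  rw [FGN_eq]
  convert Cardinal.mk_emptyCollection (Set Gam)
  simp only [Set.image_eq_empty]
  ext b
  simp

private lemma GInfty_eq :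
    GInftyCard Grp0 = Cardinal.aleph (Ordinal.omega0 : Ordinal.{0}) := by
  have hset : {c : Cardinal | ∃ N : ℕ, c = Cardinal.mk (FGN Grp0 N) ∧ Cardinal.aleph0 ≤ c}
      = Set.range fun n : ℕ => Cardinal.aleph (n : Ordinal.{0}) := by
    ext c
    constructor
    · rintro ⟨N, rfl, hc⟩
      cases N with
      | zero => rw [FGN_zero] at hc; exact absurd (le_zero_iff.mp hc) Cardinal.aleph0_ne_zero
      | succ M => exact ⟨M, (mk_FGN M).symm⟩
    · rintro ⟨n, rfl⟩
      exact ⟨n + 1, (mk_FGN n).symm, Cardinal.aleph0_le_aleph _⟩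
  rw [GInftyCard, hset, ← iSup, ← aleph_omega_eq]

/-- There exist a set `Γ` and a group `G` of permutations of `Γ` such that
`|G|_∞ > |F_{G,Γ}^N|` for every `N ∈ ℕ`.  In fact one may take `Γ = ω_ω` and construct `G` so
that `|F_{G,Γ}^N| = ℵ_{N-1}` for every `N ≥ 1`, while `|G|_∞ = ℵ_ω`. -/
theorem exists_group_GInfty_gt_FGN :
    ∃ (Γ : Type) (G : Subgroup (Equiv.Perm Γ)),
      Cardinal.mk Γ = Cardinal.aleph Ordinal.omega0 ∧
      (∀ N : ℕ, 1 ≤ N → Cardinal.mk (FGN G N) = Cardinal.aleph (N - 1 : ℕ)) ∧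
      GInftyCard G = Cardinal.aleph Ordinal.omega0 ∧
      ∀ N : ℕ, Cardinal.mk (FGN G N) < GInftyCard G := by
  refine ⟨Gam, Grp0, ?_, ?_, GInfty_eq, ?_⟩
  · rw [Gam, Cardinal.mk_sigma]
    have hterm : ∀ k : ℕ, Cardinal.mk (AA k × Fin (k + 1)) = Cardinal.aleph k := by
      intro k
      rw [Cardinal.mk_prod, Cardinal.lift_id, Cardinal.lift_id, Cardinal.mk_fin, mk_AA]
      exact Cardinal.mul_eq_left (Cardinal.aleph0_le_aleph _)
        (le_trans (Cardinal.nat_lt_aleph0 _).le (Cardinal.aleph0_le_aleph _)) (by simp)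
    simp_rw [hterm]
    apply le_antisymm
    · calc (Cardinal.sum fun k : ℕ => Cardinal.aleph (k : Ordinal.{0}))
          ≤ Cardinal.mk ℕ * ⨆ k : ℕ, Cardinal.aleph (k : Ordinal.{0}) := Cardinal.sum_le_mk_mul_iSup _
        _ = Cardinal.mk ℕ * Cardinal.aleph Ordinal.omega0 := by rw [aleph_omega_eq]
        _ ≤ Cardinal.aleph Ordinal.omega0 * Cardinal.aleph Ordinal.omega0 :=
            mul_le_mul_left (by rw [Cardinal.mk_nat]; exact Cardinal.aleph0_le_aleph _) _
        _ = _ := Cardinal.mul_eq_self (Cardinal.aleph0_le_aleph _)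
    · rw [aleph_omega_eq]
      exact ciSup_le' fun n => Cardinal.le_sum _ n
  · rintro N hN
    obtain ⟨M, rfl⟩ := Nat.exists_eq_add_of_le hN
    rw [Nat.add_comm 1 M, mk_FGN]
    norm_num
  · intro N
    rw [GInfty_eq]
    cases N with
    | zero =>
      rw [FGN_zero]
      exact Cardinal.aleph_pos _
    | succ M =>
      rw [mk_FGN]
      exact Cardinal.aleph_lt_aleph.2 (Ordinal.nat_lt_omega0 M)


end
end

section
/- Let w ∈ ℓ₂ \ ℓ₁ be a non-increasing sequence of positive numbers with w₁ < 1, and let G be a group of permutations of ℕ whose induced action on X(w) is compatible with the norm (each g acts as an isometry). If the orbit Orb_G(n₀) = {g(n₀) : g ∈ G} of some n₀ ∈ ℕ is finite, then w is constant on Orb_G(n₀), i.e. w_m = w_{n₀} for every m ∈ Orb_G(n₀). -/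
open scoped Cardinal ENNReal NNReal

noncomputable section

universe u

/-- A bounded linear operator attains its norm. -/
def NormAttains {𝕜 : Type*} [RCLike 𝕜] {X Y : Type*} [SeminormedAddCommGroup X]
    [SeminormedAddCommGroup Y] [NormedSpace 𝕜 X] [NormedSpace 𝕜 Y] (T : X →L[𝕜] Y) : Prop :=
  ∃ x : X, ‖x‖ = 1 ∧ ‖T x‖ = ‖T‖

/-- A set `M` in a topological vector space is `μ`-lineable if `M ∪ {0}` contains a vector
subspace of dimension `μ`. -/
def Lineable (𝕜 : Type*) {V : Type*} [NormedField 𝕜] [AddCommGroup V] [Module 𝕜 V]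
    (M : Set V) (μ : Cardinal) : Prop :=
  ∃ W : Submodule 𝕜 V, Module.rank 𝕜 W = μ ∧ (W : Set V) ⊆ M ∪ {0}

/-- A set `M` in a topological vector space is `μ`-spaceable if `M ∪ {0}` contains a closed
vector subspace of dimension `μ`. -/
def Spaceable (𝕜 : Type*) {V : Type*} [NormedField 𝕜] [AddCommGroup V] [Module 𝕜 V]
    [TopologicalSpace V] (M : Set V) (μ : Cardinal) : Prop :=
  ∃ W : Submodule 𝕜 V, IsClosed (W : Set V) ∧ Module.rank 𝕜 W = μ ∧ (W : Set V) ⊆ M ∪ {0}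

/-- A set `M` in a topological vector space is `(α,β)`-spaceable if it is `α`-lineable and every
`α`-dimensional subspace of `M ∪ {0}` is contained in a closed `β`-dimensional subspace of
`M ∪ {0}`. -/
def ABSpaceable (𝕜 : Type*) {V : Type*} [NormedField 𝕜] [AddCommGroup V] [Module 𝕜 V]
    [TopologicalSpace V] (M : Set V) (α β : Cardinal) : Prop :=
  Lineable 𝕜 M α ∧
    ∀ W : Submodule 𝕜 V, Module.rank 𝕜 W = α → (W : Set V) ⊆ M ∪ {0} →
      ∃ W' : Submodule 𝕜 V, IsClosed (W' : Set V) ∧ Module.rank 𝕜 W' = β ∧ W ≤ W' ∧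
        (W' : Set V) ⊆ M ∪ {0}

/-- For a Banach space with a (symmetric) Schauder basis `e` on which a group `G` of permutations
of `ℕ` acts by `g • e_n = e_{g n}`, the space `L_G` of `G`-invariant bounded linear operators:
by density of the span of the basis, `T` is `G`-invariant iff `T (e (g n)) = T (e n)` for all
`g ∈ G` and `n`. -/
def GInvariantOps {𝕜 : Type*} [RCLike 𝕜] {D E : Type*} [NormedAddCommGroup D] [NormedSpace 𝕜 D]
    [NormedAddCommGroup E] [NormedSpace 𝕜 E] (G : Subgroup (Equiv.Perm ℕ)) (e : ℕ → D) :
    Submodule 𝕜 (D →L[𝕜] E) where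
  carrier := {T | ∀ g ∈ G, ∀ n : ℕ, T (e (g n)) = T (e n)}
  add_mem' := by
    intro a b ha hb g hg n
    simp only [ContinuousLinearMap.add_apply, ha g hg n, hb g hg n]
  zero_mem' := by
    intro g hg n
    simp
  smul_mem' := by
    intro c a ha g hg n
    simp only [ContinuousLinearMap.smul_apply, ha g hg n]

/-- The norm of the canonical predual `d_*(w,1)` of the Lorentz sequence space `d(w,1)`,
evaluated on a finitely supported sequence of coefficients: the supremum over all finite sets
`S` of indices of the quotient of `∑_{i ∈ S} |a i|` by `∑_{i=1}^{|S|} w i`.  (The sum of the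
`k` largest values of `(|a i|)` is the supremum of `∑_{i ∈ S} |a i|` over `S` with `|S| = k`.) -/
def dStarNormFormula {𝕜 : Type*} [RCLike 𝕜] (w : ℕ → ℝ) (a : ℕ →₀ 𝕜) : ℝ :=
  ⨆ S : Finset ℕ, (∑ i ∈ S, ‖a i‖) / (∑ i ∈ Finset.range S.card, w i)

/-- The norm of the sequence space `Z` associated with Acosta's space `X(w)`:
`‖z‖ = ‖(1-w)z‖_∞ + ‖wz‖_1` (pointwise products). -/
def ZwNorm {𝕜 : Type*} [RCLike 𝕜] (w : ℕ → ℝ) (z : ℕ → 𝕜) : ℝ :=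
  (⨆ n, (1 - w n) * ‖z n‖) + ∑' n, w n * ‖z n‖

/-- The closed unit ball of the sequence space `Z` associated with `X(w)`. -/
def ZwBall (𝕜 : Type*) [RCLike 𝕜] (w : ℕ → ℝ) : Set (ℕ → 𝕜) :=
  {z | BddAbove (Set.range fun n => (1 - w n) * ‖z n‖) ∧
    Summable (fun n => w n * ‖z n‖) ∧ ZwNorm w z ≤ 1}

/-- The norm of Acosta's space `X(w)` (the closed linear span in `Z*` of the coordinate
functionals `eₙ`), evaluated on a finite linear combination `∑ₙ aₙ eₙ`: it is the dual norm
`sup { |∑ₙ aₙ zₙ| : ‖z‖_Z ≤ 1 }`. -/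
def XwNormFormula {𝕜 : Type*} [RCLike 𝕜] (w : ℕ → ℝ) (a : ℕ →₀ 𝕜) : ℝ :=
  ⨆ z : ZwBall 𝕜 w, ‖∑ n ∈ a.support, a n * z.1 n‖

lemma pair_sum_eq {𝕜 : Type u} [RCLike 𝕜] (p q : ℕ) (hpq : p ≠ q) (c : ℝ)
    (z : ℕ → 𝕜) :
    ∑ n ∈ (Finsupp.single p (c:𝕜) + Finsupp.single q (1:𝕜)).support,
      ((Finsupp.single p (c:𝕜) + Finsupp.single q (1:𝕜)) : ℕ →₀ 𝕜) n * z n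
      = (c:𝕜) * z p + z q := by
  have hsupp : (Finsupp.single p (c:𝕜) + Finsupp.single q (1:𝕜)).support ⊆ {p, q} := by
    refine Finsupp.support_add.trans ?_
    refine Finset.union_subset ?_ ?_
    · exact Finsupp.support_single_subset.trans (by simp)
    · exact Finsupp.support_single_subset.trans (by simp)
  rw [Finset.sum_subset hsupp (fun x _ hx => by
    rw [Finsupp.notMem_support_iff.mp hx, zero_mul]), Finset.sum_pair hpq]
  simp [Finsupp.single_apply, hpq, Ne.symm hpq]

lemma pairNorm {𝕜 : Type u} [RCLike 𝕜] (w : ℕ → ℝ) (hpos : ∀ n, 0 < w n)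
    (hlt : ∀ n, w n < 1) (p q : ℕ) (hpq : p ≠ q) (c : ℝ) (hc1 : c ≤ 1) (hcp : w p ≤ c) :
    XwNormFormula w (Finsupp.single p (c:𝕜) + Finsupp.single q (1:𝕜))
      = (c * (1 - w q) + (1 - w p)) / (1 - w p * w q) := by
  set u := w p with hu
  set v := w q with hv
  have hu0 : 0 < u := hpos p
  have hv0 : 0 < v := hpos q
  have hu1 : u < 1 := hlt p
  have hv1 : v < 1 := hlt q
  have hc0 : 0 < c := lt_of_lt_of_le hu0 hcp
  have hΔ : (0:ℝ) < 1 - u * v := by nlinarith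
  have hD : (0:ℝ) < c * (1 - v) + (1 - u) := by nlinarith
  set D := c * (1 - v) + (1 - u) with hDdef
  set Δ := 1 - u * v with hΔdef
  -- upper bound for every member of the ball
  have hub : ∀ z : ZwBall 𝕜 w, ‖(c:𝕜) * z.1 p + z.1 q‖ ≤ D / Δ := by
    rintro ⟨z, hbdd, hsumm, hnz⟩
    set S := ⨆ n, (1 - w n) * ‖z n‖ with hS
    set T := ∑' n, w n * ‖z n‖ with hT
    have hST : S + T ≤ 1 := hnz
    have hSp : (1 - u) * ‖z p‖ ≤ S := le_ciSup hbdd p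
    have hSq : (1 - v) * ‖z q‖ ≤ S := le_ciSup hbdd q
    have hTpq : u * ‖z p‖ + v * ‖z q‖ ≤ T := by
      have := Summable.sum_le_tsum {p, q} (fun i _ => mul_nonneg (hpos i).le (norm_nonneg _)) hsumm
      rwa [Finset.sum_pair hpq] at this
    have h1 : ‖(c:𝕜) * z p + z q‖ ≤ c * ‖z p‖ + ‖z q‖ := by
      refine (norm_add_le _ _).trans ?_
      rw [norm_mul, RCLike.norm_ofReal, abs_of_pos hc0]
    have key : c * ‖z p‖ + ‖z q‖ ≤ D / Δ := by
      rw [le_div_iff₀ hΔ]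
      have e1 : (c - u) * ((1 - u) * ‖z p‖) ≤ (c - u) * S :=
        mul_le_mul_of_nonneg_left hSp (by linarith)
      have e2 : (1 - c * v) * ((1 - v) * ‖z q‖) ≤ (1 - c * v) * S :=
        mul_le_mul_of_nonneg_left hSq (by nlinarith)
      have e3 : D * (u * ‖z p‖ + v * ‖z q‖) ≤ D * T :=
        mul_le_mul_of_nonneg_left hTpq (le_of_lt hD)
      have e4 : D * (S + T) ≤ D * 1 := mul_le_mul_of_nonneg_left hST (le_of_lt hD)
      have id1 : (c * ‖z p‖ + ‖z q‖) * Δ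
          = (c - u) * ((1 - u) * ‖z p‖) + (1 - c * v) * ((1 - v) * ‖z q‖)
            + D * (u * ‖z p‖ + v * ‖z q‖) := by
        rw [hΔdef, hDdef]; ring
      have id2 : (c - u) * S + (1 - c * v) * S + D * T = D * (S + T) := by
        rw [hDdef]; ring
      linarith
    exact h1.trans key
  -- witness
  set α := (1 - v) / Δ with hα
  set β := (1 - u) / Δ with hβ
  have hα0 : 0 < α := by rw [hα]; exact div_pos (by linarith) hΔ
  have hβ0 : 0 < β := by rw [hβ]; exact div_pos (by linarith) hΔ
  set z₀ : ℕ → 𝕜 := fun n => if n = p then (α:𝕜) else if n = q then (β:𝕜) else 0 with hz₀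
  have hz₀norm : ∀ n, ‖z₀ n‖ = if n = p then α else if n = q then β else 0 := by
    intro n
    simp only [hz₀]
    split_ifs <;> simp [RCLike.norm_ofReal, abs_of_pos, hα0, hβ0, le_of_lt]
  have hKey : (1 - v) * β = (1 - u) * α := by
    rw [hα, hβ]; field_simp
  have hfun : ∀ n, (1 - w n) * ‖z₀ n‖ ≤ (1 - u) * α := by
    intro n
    rw [hz₀norm]
    split_ifs with h1 h2
    · rw [h1]
    · rw [h2, ← hKey, hv]
    · have := hlt n; nlinarith
  have hbdd₀ : BddAbove (Set.range fun n => (1 - w n) * ‖z₀ n‖) := by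
    refine ⟨(1 - u) * α, ?_⟩
    rintro x ⟨n, rfl⟩
    exact hfun n
  have hzero : ∀ n ∉ ({p, q} : Finset ℕ), w n * ‖z₀ n‖ = 0 := by
    intro n hn
    simp only [Finset.mem_insert, Finset.mem_singleton, not_or] at hn
    rw [hz₀norm, if_neg hn.1, if_neg hn.2, mul_zero]
  have hsumm₀ : Summable (fun n => w n * ‖z₀ n‖) := summable_of_ne_finset_zero hzero
  have hsup₀ : (⨆ n, (1 - w n) * ‖z₀ n‖) = (1 - u) * α := by
    refine le_antisymm (ciSup_le hfun) ?_
    have := le_ciSup hbdd₀ p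
    simpa [hz₀norm] using this
  have htsum₀ : (∑' n, w n * ‖z₀ n‖) = u * α + v * β := by
    rw [tsum_eq_sum hzero, Finset.sum_pair hpq]
    simp [hz₀norm, Ne.symm hpq]
    rfl
  have hmem : z₀ ∈ ZwBall 𝕜 w := by
    refine ⟨hbdd₀, hsumm₀, ?_⟩
    rw [ZwNorm, hsup₀, htsum₀]
    have : (1 - u) * α + (u * α + v * β) = 1 := by
      have hinv : (1 - u * v) * (1 - u * v)⁻¹ = 1 := mul_inv_cancel₀ hΔ.ne'
      rw [hα, hβ, hΔdef, div_eq_mul_inv, div_eq_mul_inv]; linear_combination hinv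
    linarith
  have hz₀p : z₀ p = (α:𝕜) := by simp [hz₀]
  have hz₀q : z₀ q = (β:𝕜) := by
    have hqp : q ≠ p := Ne.symm hpq
    simp [hz₀, hqp]
  have hval : ‖(c:𝕜) * z₀ p + z₀ q‖ = D / Δ := by
    rw [hz₀p, hz₀q, ← RCLike.ofReal_mul, ← RCLike.ofReal_add, RCLike.norm_ofReal,
      abs_of_pos (by positivity), hα, hβ, hDdef]
    field_simp
  -- conclude
  rw [XwNormFormula]
  have hrw : ∀ z : ZwBall 𝕜 w,
      ‖∑ n ∈ (Finsupp.single p (c:𝕜) + Finsupp.single q (1:𝕜)).support,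
        ((Finsupp.single p (c:𝕜) + Finsupp.single q (1:𝕜)) : ℕ →₀ 𝕜) n * z.1 n‖
      = ‖(c:𝕜) * z.1 p + z.1 q‖ := fun z => by rw [pair_sum_eq p q hpq c z.1]
  have hne : Nonempty (ZwBall 𝕜 w) := ⟨⟨z₀, hmem⟩⟩
  refine le_antisymm (ciSup_le fun z => le_of_eq_of_le (hrw z) (hub z)) ?_
  have hbddr : BddAbove (Set.range fun z : ZwBall 𝕜 w =>
      ‖∑ n ∈ (Finsupp.single p (c:𝕜) + Finsupp.single q (1:𝕜)).support,
        ((Finsupp.single p (c:𝕜) + Finsupp.single q (1:𝕜)) : ℕ →₀ 𝕜) n * z.1 n‖) := by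
    refine ⟨D / Δ, ?_⟩
    rintro x ⟨z, rfl⟩
    exact le_of_eq_of_le (hrw z) (hub z)
  exact le_ciSup_of_le hbddr ⟨z₀, hmem⟩ ((hrw ⟨z₀, hmem⟩).trans hval).ge
lemma eq_of_phi {u v t : ℝ} (hu1 : u < 1) (hv0 : 0 < v) (hv1 : v < 1) (ht1 : t < 1)
    (hu0 : 0 < u) (ht0 : 0 < t)
    (h : (1 * (1 - v) + (1 - u)) / (1 - u * v) = (1 * (1 - t) + (1 - v)) / (1 - v * t)) :
    u = t := by
  have h1 : (0:ℝ) < 1 - u * v := by nlinarith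
  have h2 : (0:ℝ) < 1 - v * t := by nlinarith
  rw [div_eq_div_iff h1.ne' h2.ne'] at h
  have hfac : (t - u) * (1 - v) ^ 2 = 0 := by linear_combination h
  rcases mul_eq_zero.mp hfac with h' | h'
  · linarith [sub_eq_zero.mp h']
  · have : (1:ℝ) - v = 0 := by
      have := pow_eq_zero_iff (n := 2) (by norm_num) |>.mp h'
      exact this
    linarith

lemma eq_of_psi {u v c : ℝ} (hu1 : u < 1) (hv1 : v < 1) (hu0 : 0 < u) (hv0 : 0 < v)
    (hc : c < 1)
    (h : (c * (1 - v) + (1 - u)) / (1 - u * v) = (c * (1 - u) + (1 - v)) / (1 - v * u)) :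
    u = v := by
  have h1 : (0:ℝ) < 1 - u * v := by nlinarith
  have h2 : (0:ℝ) < 1 - v * u := by rw [mul_comm]; exact h1
  rw [div_eq_div_iff h1.ne' h2.ne'] at h
  have hfac : (1 - u * v) * ((u - v) * (c - 1)) = 0 := by linear_combination h
  rcases mul_eq_zero.mp hfac with h' | h'
  · linarith
  · rcases mul_eq_zero.mp h' with h'' | h''
    · linarith [sub_eq_zero.mp h'']
    · linarith


private lemma pair_finsupp_sum {𝕜 : Type u} [RCLike 𝕜] {X : Type u} [NormedAddCommGroup X]
    [NormedSpace 𝕜 X] (p q : ℕ) (c : ℝ) (f : ℕ → X) :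
    (Finsupp.single p (c:𝕜) + Finsupp.single q (1:𝕜)).sum (fun n v => v • f n)
      = (c:𝕜) • f p + f q := by
  rw [Finsupp.sum_add_index' (fun n => zero_smul 𝕜 (f n)) (fun n v w => add_smul v w (f n)),
    Finsupp.sum_single_index (zero_smul 𝕜 (f p)), Finsupp.sum_single_index (zero_smul 𝕜 (f q)),
    one_smul]

/-- Let `w ∈ ℓ₂ \ ℓ₁` be a non-increasing sequence of positive numbers with
`w₁ < 1`, and let `G` be a group of permutations of `ℕ` whose induced action on Acosta's space
`X(w)` is compatible with the norm (each `g` acts as an isometry).  If the orbit of some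
`n₀ ∈ ℕ` under `G` is finite, then `w` is constant on that orbit. -/
theorem w_constant_on_finite_orbit
    {𝕜 : Type u} [RCLike 𝕜]
    (w : ℕ → ℝ) (hw_pos : ∀ n, 0 < w n) (hw_anti : Antitone w) (hw_one : w 0 < 1)
    (hw_l2 : Summable fun n => (w n) ^ 2) (hw_l1 : ¬ Summable w)
    (G : Subgroup (Equiv.Perm ℕ))
    -- `X` is Acosta's space `X(w)`:
    {X : Type u} [NormedAddCommGroup X] [NormedSpace 𝕜 X] [CompleteSpace X]
    (e : ℕ → X)
    (hdense : Dense (Submodule.span 𝕜 (Set.range e) : Set X))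
    (hnorm : ∀ a : ℕ →₀ 𝕜, ‖a.sum fun n v => v • e n‖ = XwNormFormula w a)
    -- the action of `G` on `X(w)` is compatible with the norm (acts by isometries):
    (hiso : ∀ g ∈ G, ∀ a : ℕ →₀ 𝕜,
      ‖a.sum fun n v => v • e (g n)‖ = ‖a.sum fun n v => v • e n‖)
    (n₀ : ℕ) (hfin : (orbitOf G n₀).Finite) :
    ∀ m ∈ orbitOf G n₀, w m = w n₀ := by
  rintro m ⟨g, hgG, rfl⟩
  by_cases hm : g n₀ = n₀
  · rw [hm]
  have hlt : ∀ n, w n < 1 := fun n => lt_of_le_of_lt (hw_anti (Nat.zero_le n)) hw_one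
  have hpairEq : ∀ (c : ℝ), c ≤ 1 → ∀ p q : ℕ, p ≠ q → w p ≤ c → w (g p) ≤ c →
      (c * (1 - w q) + (1 - w p)) / (1 - w p * w q)
        = (c * (1 - w (g q)) + (1 - w (g p))) / (1 - w (g p) * w (g q)) := by
    intro c hc1 p q hpq hcp hcgp
    have hgpq : g p ≠ g q := fun h => hpq (g.injective h)
    have h1 := pairNorm (𝕜 := 𝕜) w hw_pos hlt p q hpq c hc1 hcp
    have h2 := pairNorm (𝕜 := 𝕜) w hw_pos hlt (g p) (g q) hgpq c hc1 hcgp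
    have h3 := hiso g hgG (Finsupp.single p (c:𝕜) + Finsupp.single q (1:𝕜))
    rw [hnorm, pair_finsupp_sum p q c (fun n => e (g n)),
      ← pair_finsupp_sum (g p) (g q) c e, hnorm] at h3
    rw [h1, h2] at h3
    exact h3.symm
  have hne1 : n₀ ≠ g n₀ := Ne.symm hm
  have hne2 : g n₀ ≠ g (g n₀) := fun h => hne1 (g.injective h)
  have E1 := hpairEq 1 le_rfl n₀ (g n₀) hne1 (hlt n₀).le (hlt (g n₀)).le
  have E1' := hpairEq 1 le_rfl (g n₀) (g (g n₀)) hne2 (hlt _).le (hlt _).le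
  have htu : w n₀ = w (g (g n₀)) :=
    eq_of_phi (hlt n₀) (hw_pos _) (hlt _) (hlt _) (hw_pos _) (hw_pos _) E1
  set c : ℝ := (max (w n₀) (w (g n₀)) + 1) / 2 with hc
  have hmax1 : max (w n₀) (w (g n₀)) < 1 := max_lt (hlt _) (hlt _)
  have hc1 : c < 1 := by rw [hc]; linarith
  have hcu : w n₀ ≤ c := by
    have := le_max_left (w n₀) (w (g n₀)); rw [hc]; linarith [hlt n₀]
  have hcv : w (g n₀) ≤ c := by
    have := le_max_right (w n₀) (w (g n₀)); rw [hc]; linarith [hlt (g n₀)]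
  have E2 := hpairEq c hc1.le n₀ (g n₀) hne1 hcu hcv
  rw [← htu] at E2
  exact (eq_of_psi (hlt n₀) (hlt _) (hw_pos n₀) (hw_pos _) hc1 E2).symm


end
end
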